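/- Let G be a finite non-cyclic group and a ≠ e an element whose order is not a prime power. Then the set of closed twins of a in the power graph of G equals gen(⟨a⟩)∖{a}, and hence N_a = φ(ord(a)). -/

import Mathlib

open Subgroup

def padj {G : Type*} [Group G] (a b : G) : Prop :=
  a ≠ b ∧ (Subgroup.zpowers a ≤ Subgroup.zpowers b ∨ Subgroup.zpowers b ≤ Subgroup.zpowers a)

def pnbhd {G : Type*} [Group G] (a : G) : Set G := {x | padj a x}

def closedTwins {G : Type*} [Group G] (a : G) : Set G :=
  {b | padj a b ∧ pnbhd a \ {b} = pnbhd b \ {a}}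

noncomputable def Ncount {G : Type*} [Group G] (a : G) : ℕ := (closedTwins a).ncard + 1

def eadj {G : Type*} [Group G] (a b : G) : Prop :=
  a ≠ b ∧ ∃ c : G, a ∈ Subgroup.zpowers c ∧ b ∈ Subgroup.zpowers c

/-- A non-prime-power `n ≥ 2` has two distinct prime divisors. -/
lemma two_primes {n : ℕ} (hn1 : n ≠ 1) (hn0 : n ≠ 0) (hnp : ¬ IsPrimePow n) :
    ∃ p q : ℕ, p.Prime ∧ q.Prime ∧ p ≠ q ∧ p ∣ n ∧ q ∣ n := by
  set p := n.minFac with hp_def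
  have hp : p.Prime := Nat.minFac_prime hn1
  have hpn : p ∣ n := Nat.minFac_dvd n
  set m := n / p ^ n.factorization p with hm_def
  have hsplit : p ^ n.factorization p * m = n := Nat.ordProj_mul_ordCompl_eq_self n p
  have hm0 : m ≠ 0 := (Nat.ordCompl_pos p hn0).ne'
  have hm1 : m ≠ 1 := by
    intro h
    apply hnp
    rw [h, mul_one] at hsplit
    exact ⟨p, n.factorization p, hp.prime,
      hp.factorization_pos_of_dvd hn0 hpn, hsplit⟩
  refine ⟨p, m.minFac, hp, Nat.minFac_prime hm1, ?_, hpn, (m.minFac_dvd).trans (Dvd.intro_left _ hsplit)⟩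
  intro h
  have hco : Nat.Coprime p m := Nat.coprime_ordCompl hp hn0
  have : p ∣ m := h ▸ m.minFac_dvd
  exact hp.one_lt.ne' (Nat.eq_one_of_dvd_one (hco ▸ Nat.dvd_gcd dvd_rfl this))

/-- order of `u ^ (n / R)` is `R` when `R ∣ n = orderOf u`. -/
lemma orderOf_pow_div {G : Type*} [Group G] [Finite G] (u : G) {R : ℕ}
    (hR : R ∣ orderOf u) : orderOf (u ^ (orderOf u / R)) = R := by
  have hn0 : orderOf u ≠ 0 := (orderOf_pos u).ne'
  rw [orderOf_pow u, Nat.gcd_eq_right (Nat.div_dvd_of_dvd hR), Nat.div_div_self hR hn0]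

/-- If every element of prime-power order lies in `H`, then every element does. -/
lemma mem_of_primePow {G : Type*} [Group G] [Finite G] (H : Subgroup G)
    (h : ∀ x : G, IsPrimePow (orderOf x) → x ∈ H) : ∀ x : G, x ∈ H := by
  have key : ∀ k : ℕ, ∀ x : G, orderOf x = k → x ∈ H := by
    intro k
    induction k using Nat.strong_induction_on with
    | _ k ih =>
      intro x hx
      have hk0 : k ≠ 0 := hx ▸ (orderOf_pos x).ne'
      rcases eq_or_ne k 1 with hk1 | hk1
      · have : x = 1 := orderOf_eq_one_iff.mp (hx.trans hk1)
        exact this ▸ H.one_mem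
      by_cases hpp : IsPrimePow k
      · exact h x (hx ▸ hpp)
      -- split k = s * t coprime, both ≥ 2
      set p := k.minFac with hp_def
      have hp : p.Prime := Nat.minFac_prime hk1
      set s := p ^ k.factorization p with hs_def
      set t := k / s with ht_def
      have hst : s * t = k := Nat.ordProj_mul_ordCompl_eq_self k p
      have ht0 : t ≠ 0 := (Nat.ordCompl_pos p hk0).ne'
      have ht1 : t ≠ 1 := by
        intro h1
        rw [h1, mul_one] at hst
        exact hpp ⟨p, k.factorization p, hp.prime,
          hp.factorization_pos_of_dvd hk0 (Nat.minFac_dvd k), hst⟩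
      have hs1 : 1 < s :=
        Nat.one_lt_pow (hp.factorization_pos_of_dvd hk0 (Nat.minFac_dvd k)).ne' hp.one_lt
      have htk : t < k := Nat.div_lt_self (Nat.pos_of_ne_zero hk0) hs1
      have hsk : s < k := by
        refine lt_of_le_of_ne (Nat.le_of_dvd (Nat.pos_of_ne_zero hk0) (Nat.ordProj_dvd k p)) ?_
        intro h
        exact ht1 (by rw [ht_def, h, Nat.div_self (Nat.pos_of_ne_zero hk0)])
      have hco : Nat.Coprime s t := (Nat.coprime_ordCompl hp hk0).pow_left _
      -- Bezout
      have hbez : (s : ℤ) * Nat.gcdA s t + (t : ℤ) * Nat.gcdB s t = 1 := by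
        have := Nat.gcd_eq_gcd_ab s t
        rw [hco] at this
        exact_mod_cast this.symm
      set y₁ := x ^ ((s : ℤ) * Nat.gcdA s t) with hy₁
      set y₂ := x ^ ((t : ℤ) * Nat.gcdB s t) with hy₂
      have hxy : x = y₁ * y₂ := by
        rw [hy₁, hy₂, ← zpow_add, hbez, zpow_one]
      have hxk : x ^ (k : ℤ) = 1 := by
        rw [zpow_natCast, ← hx, pow_orderOf_eq_one]
      have hy₁t : y₁ ^ t = 1 := by
        rw [hy₁, ← zpow_natCast, ← zpow_mul]
        have : (s : ℤ) * Nat.gcdA s t * t = (k : ℤ) * Nat.gcdA s t := by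
          push_cast [← hst]; ring
        rw [this, zpow_mul, hxk, one_zpow]
      have hy₂s : y₂ ^ s = 1 := by
        rw [hy₂, ← zpow_natCast, ← zpow_mul]
        have : (t : ℤ) * Nat.gcdB s t * s = (k : ℤ) * Nat.gcdB s t := by
          push_cast [← hst]; ring
        rw [this, zpow_mul, hxk, one_zpow]
      have ho₁ : orderOf y₁ ∣ t := orderOf_dvd_of_pow_eq_one hy₁t
      have ho₂ : orderOf y₂ ∣ s := orderOf_dvd_of_pow_eq_one hy₂s
      have h₁ : y₁ ∈ H := ih (orderOf y₁)
        (lt_of_le_of_lt (Nat.le_of_dvd (Nat.pos_of_ne_zero ht0) ho₁) htk) y₁ rfl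
      have h₂ : y₂ ∈ H := ih (orderOf y₂)
        (lt_of_le_of_lt (Nat.le_of_dvd (by omega) ho₂) hsk) y₂ rfl
      rw [hxy]; exact H.mul_mem h₁ h₂
  exact fun x => key (orderOf x) x rfl

/-- Star-vertex lemma: if `z` of non-prime-power order is comparable with everything,
the group is cyclic. -/
lemma star_cyclic {G : Type*} [Group G] [Finite G] (z : G) (hz : z ≠ 1)
    (hnp : ¬ IsPrimePow (orderOf z))
    (hstar : ∀ x : G, x ≠ z → x ∈ Subgroup.zpowers z ∨ z ∈ Subgroup.zpowers x) :
    IsCyclic G := by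
  set n := orderOf z with hn_def
  have hn0 : n ≠ 0 := (orderOf_pos z).ne'
  have hn1 : n ≠ 1 := fun h => hz (orderOf_eq_one_iff.mp h)
  obtain ⟨p, q, hp, hq, hpq, hpn, hqn⟩ := two_primes hn1 hn0 hnp
  have hpp : ∀ x : G, IsPrimePow (orderOf x) → x ∈ Subgroup.zpowers z := by
    intro x hx
    rcases eq_or_ne x z with rfl | hxz
    · exact Subgroup.mem_zpowers x
    rcases hstar x hxz with h | h
    · exact h
    · exfalso
      obtain ⟨r, k, hr, hk, hrk⟩ := (isPrimePow_nat_iff _).mp hx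
      have hdvd : n ∣ r ^ k := hrk ▸ orderOf_dvd_of_mem_zpowers h
      have hpr : p = r := (Nat.prime_dvd_prime_iff_eq hp hr).mp
        (hp.dvd_of_dvd_pow (hpn.trans hdvd))
      have hqr : q = r := (Nat.prime_dvd_prime_iff_eq hq hr).mp
        (hq.dvd_of_dvd_pow (hqn.trans hdvd))
      exact hpq (hpr.trans hqr.symm)
  exact ⟨⟨z, mem_of_primePow _ hpp⟩⟩

/-- strict twin forces the smaller element to be the identity. -/
lemma twin_eq_one {G : Type*} [Group G] [Finite G] {u v : G}
    (hnp : ¬ IsPrimePow (orderOf u)) (hu : u ≠ 1)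
    (hlt : Subgroup.zpowers v < Subgroup.zpowers u)
    (htw : pnbhd u \ {v} = pnbhd v \ {u}) : v = 1 := by
  set n := orderOf u with hn_def
  set m := orderOf v with hm_def
  have hn0 : n ≠ 0 := (orderOf_pos u).ne'
  have hm0 : m ≠ 0 := (orderOf_pos v).ne'
  have hn1 : n ≠ 1 := fun h => hu (orderOf_eq_one_iff.mp h)
  have hvmem : v ∈ Subgroup.zpowers u := Subgroup.zpowers_le.mp hlt.le
  have hmn : m ∣ n := orderOf_dvd_of_mem_zpowers hvmem
  have hm_ne : m ≠ n := by
    intro h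
    apply hlt.ne
    apply Subgroup.eq_of_le_of_card_ge hlt.le
    rw [Nat.card_zpowers, Nat.card_zpowers]
    exact le_of_eq h.symm
  have key : ∀ r : ℕ, r.Prime → r ∣ n →
      (r ^ n.factorization r ∣ m ∨ m ∣ r ^ n.factorization r) := by
    intro r hr hrn
    set R := r ^ n.factorization r with hR_def
    have hRn : R ∣ n := Nat.ordProj_dvd n r
    have hRne : R ≠ n := by
      intro h
      exact hnp ⟨r, n.factorization r, hr.prime,
        hr.factorization_pos_of_dvd hn0 hrn, h⟩
    set z := u ^ (n / R) with hz_def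
    have hz_ord : orderOf z = R := orderOf_pow_div u hRn
    have hz_mem : z ∈ Subgroup.zpowers u := Subgroup.npow_mem_zpowers u (n / R)
    have hz_ne_u : z ≠ u := fun h => hRne (by rw [← hz_ord, h])
    rcases eq_or_ne z v with hzv | hzv
    · right
      rw [hm_def, ← hzv, hz_ord]
    · have hz_in : z ∈ pnbhd u \ {v} :=
        ⟨⟨fun h => hz_ne_u h.symm, Or.inr (Subgroup.zpowers_le.mpr hz_mem)⟩, hzv⟩
      rw [htw] at hz_in
      obtain ⟨⟨_, hcomp⟩, _⟩ := hz_in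
      rcases hcomp with h | h
      · right
        rw [hm_def, ← hz_ord]
        exact orderOf_dvd_of_mem_zpowers (Subgroup.zpowers_le.mp h)
      · left
        rw [← hz_ord]
        exact orderOf_dvd_of_mem_zpowers (Subgroup.zpowers_le.mp h)
  obtain ⟨p, q, hp, hq, hpq, hpn, hqn⟩ := two_primes hn1 hn0 hnp
  by_cases hall : ∀ r : ℕ, r.Prime → r ∣ n → r ^ n.factorization r ∣ m
  · exfalso
    apply hm_ne
    refine Nat.dvd_antisymm hmn ?_
    rw [← Nat.factorization_le_iff_dvd hn0 hm0]
    rw [Finsupp.le_def]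
    intro r
    by_cases hr : r.Prime ∧ r ∣ n
    · exact (Nat.Prime.pow_dvd_iff_le_factorization hr.1 hm0).mp (hall r hr.1 hr.2)
    · rcases not_and_or.mp hr with h | h
      · rw [Nat.factorization_eq_zero_of_not_prime n h]; omega
      · rw [Nat.factorization_eq_zero_of_not_dvd h]; omega
  · push_neg at hall
    obtain ⟨r, hr, hrn, hrm⟩ := hall
    have hmr : m ∣ r ^ n.factorization r := (key r hr hrn).resolve_left hrm
    -- pick a second prime r' ≠ r dividing n
    obtain ⟨r', hr', hr'n, hr'r⟩ : ∃ r' : ℕ, r'.Prime ∧ r' ∣ n ∧ r' ≠ r := by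
      rcases eq_or_ne r p with rfl | hne
      · exact ⟨q, hq, hqn, fun h => hpq h.symm⟩
      · exact ⟨p, hp, hpn, hne.symm⟩
    rcases key r' hr' hr'n with h | h
    · exfalso
      have h1 : r' ∣ m := dvd_trans
        (dvd_pow_self r' (hr'.factorization_pos_of_dvd hn0 hr'n).ne') h
      have h2 : r' ∣ r ^ n.factorization r := h1.trans hmr
      exact hr'r ((Nat.prime_dvd_prime_iff_eq hr' hr).mp (hr'.dvd_of_dvd_pow h2))
    · have hco : Nat.Coprime (r ^ n.factorization r) (r' ^ n.factorization r') :=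
        Nat.Coprime.pow _ _ ((Nat.coprime_primes hr hr').mpr (fun hh => hr'r hh.symm))
      have : m ∣ 1 := hco ▸ Nat.dvd_gcd hmr h
      have hm1 : m = 1 := Nat.eq_one_of_dvd_one this
      exact orderOf_eq_one_iff.mp hm1

/-- in the `v = 1` case, `u` is a star vertex. -/
lemma star_of_twin_one {G : Type*} [Group G] {u : G} (hu : u ≠ 1)
    (htw : pnbhd u \ {(1 : G)} = pnbhd (1 : G) \ {u}) :
    ∀ x : G, x ≠ u → x ∈ Subgroup.zpowers u ∨ u ∈ Subgroup.zpowers x := by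
  intro x hxu
  rcases eq_or_ne x 1 with rfl | hx1
  · exact Or.inl (Subgroup.one_mem _)
  have hx : x ∈ pnbhd (1 : G) \ {u} := by
    refine ⟨⟨fun h => hx1 h.symm, Or.inl ?_⟩, hxu⟩
    rw [Subgroup.zpowers_one_eq_bot]
    exact bot_le
  rw [← htw] at hx
  obtain ⟨⟨_, hcomp⟩, _⟩ := hx
  rcases hcomp with h | h
  · exact Or.inr (Subgroup.zpowers_le.mp h)
  · exact Or.inl (Subgroup.zpowers_le.mp h)

/-- a non-trivial divisor of a prime power is a prime power. -/
lemma not_isPrimePow_of_dvd {d n : ℕ} (hd : d ∣ n) (hd1 : d ≠ 1)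
    (hnp : ¬ IsPrimePow d) : ¬ IsPrimePow n := by
  intro hn
  obtain ⟨p, k, hp, hk, rfl⟩ := (isPrimePow_nat_iff _).mp hn
  obtain ⟨j, hj, rfl⟩ := (Nat.dvd_prime_pow hp).mp hd
  exact hnp ⟨p, j, hp.prime, Nat.pos_of_ne_zero (fun h => hd1 (by rw [h, pow_zero])), rfl⟩

theorem stmt5 {G : Type*} [Group G] [Finite G] (hnc : ¬ IsCyclic G)
    (a : G) (ha : a ≠ 1) (hord : ¬ IsPrimePow (orderOf a)) :
    closedTwins a = {b : G | Subgroup.zpowers b = Subgroup.zpowers a} \ {a} ∧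
      Ncount a = Nat.totient (orderOf a) := by
  set n := orderOf a with hn_def
  have hn0 : n ≠ 0 := (orderOf_pos a).ne'
  have hset : closedTwins a = {b : G | Subgroup.zpowers b = Subgroup.zpowers a} \ {a} := by
    ext b
    simp only [closedTwins, Set.mem_setOf_eq, Set.mem_diff, Set.mem_singleton_iff]
    constructor
    · rintro ⟨⟨hab, hcomp⟩, htw⟩
      refine ⟨?_, fun h => hab h.symm⟩
      rcases hcomp with h1 | h2
      · by_cases h2 : Subgroup.zpowers b ≤ Subgroup.zpowers a
        · exact le_antisymm h2 h1
        · exfalso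
          have hlt : Subgroup.zpowers a < Subgroup.zpowers b :=
            lt_of_le_of_ne h1 (fun h => h2 h.ge)
          have hb1 : b ≠ 1 := by
            rintro rfl
            rw [Subgroup.zpowers_one_eq_bot] at h1
            exact ha (Subgroup.mem_bot.mp (h1 (Subgroup.mem_zpowers a)))
          have hbnp : ¬ IsPrimePow (orderOf b) := by
            refine not_isPrimePow_of_dvd ?_ ?_ hord
            · exact orderOf_dvd_of_mem_zpowers (Subgroup.zpowers_le.mp h1)
            · exact fun h => ha (orderOf_eq_one_iff.mp h)
          exact ha (twin_eq_one hbnp hb1 hlt htw.symm)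
      · by_cases h1 : Subgroup.zpowers a ≤ Subgroup.zpowers b
        · exact le_antisymm h2 h1
        · exfalso
          have hlt : Subgroup.zpowers b < Subgroup.zpowers a :=
            lt_of_le_of_ne h2 (fun h => h1 h.ge)
          have hb1 : b = 1 := twin_eq_one hord ha hlt htw
          subst hb1
          exact hnc (star_cyclic a ha hord (star_of_twin_one ha htw))
    · rintro ⟨heq, hba⟩
      refine ⟨⟨fun h => hba h.symm, Or.inl heq.ge⟩, ?_⟩
      ext x
      simp only [pnbhd, padj, Set.mem_diff, Set.mem_setOf_eq, Set.mem_singleton_iff]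
      constructor
      · rintro ⟨⟨hax, hcomp⟩, hxb⟩
        refine ⟨⟨fun h => hxb h.symm, ?_⟩, fun h => hax h.symm⟩
        rw [heq]; exact hcomp
      · rintro ⟨⟨hbx, hcomp⟩, hxa⟩
        refine ⟨⟨fun h => hxa h.symm, ?_⟩, fun h => hbx h.symm⟩
        rw [← heq]; exact hcomp
  refine ⟨hset, ?_⟩
  -- cardinality
  have : Fintype G := Fintype.ofFinite G
  haveI hHc : IsCyclic (Subgroup.zpowers a) :=
    ⟨⟨⟨a, Subgroup.mem_zpowers a⟩, fun x => by
      obtain ⟨k, hk⟩ := x.2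
      exact ⟨k, Subtype.ext (by simp [← hk])⟩⟩⟩
  have hcard : Fintype.card (Subgroup.zpowers a) = n := Fintype.card_zpowers
  have hfil := IsCyclic.card_orderOf_eq_totient
    (α := Subgroup.zpowers a) (d := n) (hcard ▸ dvd_rfl)
  have himg : {b : G | Subgroup.zpowers b = Subgroup.zpowers a} =
      Subtype.val '' {x : Subgroup.zpowers a | orderOf x = n} := by
    ext b
    simp only [Set.mem_setOf_eq, Set.mem_image]
    constructor
    · intro hb
      have hbmem : b ∈ Subgroup.zpowers a := hb ▸ Subgroup.mem_zpowers b
      refine ⟨⟨b, hbmem⟩, ?_, rfl⟩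
      show orderOf (⟨b, hbmem⟩ : Subgroup.zpowers a) = n
      rw [Subgroup.orderOf_mk, hn_def, ← Nat.card_zpowers, ← Nat.card_zpowers, hb]
    · rintro ⟨x, hx, rfl⟩
      have hx' : orderOf (x : G) = n := by
        rw [Subgroup.orderOf_coe]
        exact hx
      apply Subgroup.eq_of_le_of_card_ge (Subgroup.zpowers_le.mpr x.2)
      rw [Nat.card_zpowers, Nat.card_zpowers, hx', hn_def]
  have hS : {b : G | Subgroup.zpowers b = Subgroup.zpowers a}.ncard = n.totient := by
    rw [himg, Set.ncard_image_of_injective _ Subtype.val_injective]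
    rw [← hfil]
    rw [Set.ncard_eq_toFinset_card']
    congr 1
    ext x
    simp
  have hamem : a ∈ {b : G | Subgroup.zpowers b = Subgroup.zpowers a} := rfl
  have htotpos : 0 < n.totient := Nat.totient_pos.mpr (Nat.pos_of_ne_zero hn0)
  rw [Ncount, hset, Set.ncard_diff_singleton_of_mem hamem, hS]
  omega
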